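/- Let α, β ∈ ℕ with α, β > 1, let l ≥ 2, let z₁,…,z_l ∈ {α, β}, and let a, b ∈ {1,…,l} be distinct indices with z_a = z_b. Let A ∈ ℤ^{r×l} with r ≥ 1, and let N₁, N₂ ∈ ℕ with N₁ ≤ N₂. Then there exist matrices Ã_k ∈ ℤ^{r×(l−1)} for N₁ ≤ k ≤ N₂ and y₁,…,y_{l−1} ∈ {α, β} with the following property: there exist natural numbers n₁,…,n_{l−1} and some k with N₁ ≤ k ≤ N₂ such that every entry of Ã_k·(y₁^{n₁},…,y_{l−1}^{n_{l−1}}) is strictly positive, if and only if there exist natural numbers n₁,…,n_l such that every entry of A·(z₁^{n₁},…,z_l^{n_l}) is strictly positive and N₁ ≤ n_a − n_b ≤ N₂. -/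
import Mathlib


/-- Variable elimination: let `α, β > 1`, `l ≥ 2`, `z₁,…,z_l ∈ {α, β}`, and let `a ≠ b` be
indices with `z_a = z_b`. Given `A ∈ ℤ^{r×l}` with `r ≥ 1` and `N₁ ≤ N₂` in `ℕ`, there are
matrices `Ã_k ∈ ℤ^{r×(l−1)}` for `N₁ ≤ k ≤ N₂` and `y₁,…,y_{l−1} ∈ {α, β}` such that
`Ã_k·(y₁^{n₁},…,y_{l−1}^{n_{l−1}}) > 0` has a solution for some `N₁ ≤ k ≤ N₂` if and only if
`A·(z₁^{n₁},…,z_l^{n_l}) > 0 ∧ N₁ ≤ n_a − n_b ≤ N₂` has a solution. -/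
theorem eliminate_variable (α β : ℕ) (hα : 1 < α) (hβ : 1 < β)
    (l : ℕ) (hl : 2 ≤ l) (z : Fin l → ℕ) (hz : ∀ i, z i = α ∨ z i = β)
    (a b : Fin l) (hab : a ≠ b) (hzab : z a = z b)
    (r : ℕ) (hr : 1 ≤ r) (A : Matrix (Fin r) (Fin l) ℤ)
    (N₁ N₂ : ℕ) (hN : N₁ ≤ N₂) :
    ∃ (Atil : ℕ → Matrix (Fin r) (Fin (l - 1)) ℤ) (y : Fin (l - 1) → ℕ),
      (∀ i, y i = α ∨ y i = β) ∧
      ((∃ k, N₁ ≤ k ∧ k ≤ N₂ ∧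
          ∃ n : Fin (l - 1) → ℕ, ∀ i, 0 < ∑ j, Atil k i j * (y j : ℤ) ^ (n j)) ↔
        (∃ n : Fin l → ℕ, (∀ i, 0 < ∑ j, A i j * (z j : ℤ) ^ (n j)) ∧
          (N₁ : ℤ) ≤ (n a : ℤ) - (n b : ℤ) ∧ (n a : ℤ) - (n b : ℤ) ≤ (N₂ : ℤ))) := by
  obtain ⟨m, rfl⟩ : ∃ m, l = m + 1 := ⟨l - 1, by omega⟩
  obtain ⟨b', heb'⟩ : ∃ b', a.succAbove b' = b := Fin.exists_succAbove_eq (Ne.symm hab)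
  set Atil : ℕ → Matrix (Fin r) (Fin m) ℤ := fun k i j =>
    A i (a.succAbove j) + if j = b' then A i a * (z b : ℤ) ^ k else 0 with hAtil
  set y : Fin m → ℕ := fun j => z (a.succAbove j) with hy
  have hyb' : y b' = z b := by simp only [hy, heb']
  have key : ∀ (i : Fin r) (k : ℕ) (n : Fin m → ℕ),
      (∑ j, Atil k i j * (y j : ℤ) ^ (n j)) =
        ∑ j', A i j' * (z j' : ℤ) ^ ((Fin.insertNth a (n b' + k) n) j') := by
    intro i k n
    conv_rhs => rw [Fin.sum_univ_succAbove _ a]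
    simp only [Fin.insertNth_apply_same, Fin.insertNth_apply_succAbove, hAtil, add_mul]
    rw [Finset.sum_add_distrib]
    have : (∑ j, (if j = b' then A i a * (z b : ℤ) ^ k else 0) * (y j : ℤ) ^ (n j))
        = A i a * (z b : ℤ) ^ k * (z b : ℤ) ^ (n b') := by
      rw [Finset.sum_eq_single b']
      · simp [hyb']
      · intro j _ hj; simp [hj]
      · intro h; exact absurd (Finset.mem_univ b') h
    rw [this, hzab, pow_add]
    simp only [hy]
    ring
  refine ⟨Atil, y, fun i => hz _, ?_⟩
  constructor
  · rintro ⟨k, hk1, hk2, n, hn⟩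
    refine ⟨Fin.insertNth a (n b' + k) n, fun i => (key i k n) ▸ hn i, ?_, ?_⟩ <;>
    · rw [show b = a.succAbove b' from heb'.symm, Fin.insertNth_apply_same,
        Fin.insertNth_apply_succAbove]
      push_cast
      omega
  · rintro ⟨M, hpos, h1, h2⟩
    have hba : (M b : ℤ) ≤ M a := by have : (0:ℤ) ≤ N₁ := Int.natCast_nonneg _; omega
    have hble : M b ≤ M a := by exact_mod_cast hba
    refine ⟨M a - M b, by omega, by omega, fun j => M (a.succAbove j), fun i => ?_⟩
    have hMeq : Fin.insertNth a ((fun j => M (a.succAbove j)) b' + (M a - M b)) (fun j => M (a.succAbove j)) = M := by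
      refine funext fun i => Fin.succAboveCases a ?_ (fun j => ?_) i
      · rw [Fin.insertNth_apply_same]
        simp only [heb']
        omega
      · rw [Fin.insertNth_apply_succAbove]
    show 0 < ∑ j : Fin m, Atil (M a - M b) i j * (y j : ℤ) ^ (M (a.succAbove j))
    rw [key i (M a - M b) (fun j => M (a.succAbove j)), hMeq]
    exact hpos i
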